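/- Let E be a real inner product space and Δ : E →ₗ[ℝ] E a symmetric linear map satisfying the compactness property, the weak-regularity property, and the coercivity estimate with some constant k > 0. Then ker Δ is finite-dimensional, and, writing H for the orthogonal projection of E onto ker Δ, for every α ∈ E there exists a unique β ∈ (ker Δ)ᗮ such that Δ β = α − H α. (Existence and uniqueness of the Green operator, Theorem 2.) -/

import Mathlib

open scoped RealInnerProductSpace

/-- Existence and uniqueness of the Green operator (Theorem 2, abstract form):
under the compactness, weak-regularity and coercivity hypotheses, `ker Δ` is
finite-dimensional, and for every `α` there is a unique `β ∈ (ker Δ)ᗮ` with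
`Δ β = α - H α`, where `H α` is the orthogonal projection of `α` onto `ker Δ`.
(The condition `Δ β = α - H α` is expressed by its characterization:
`α - Δ β ∈ ker Δ` and `Δ β ∈ (ker Δ)ᗮ`, i.e. `α - Δ β` is the harmonic part
of `α`.) -/
theorem green_operator_exists_unique
    {E : Type*} [NormedAddCommGroup E] [InnerProductSpace ℝ E]
    (Δ : E →ₗ[ℝ] E)
    (hsym : ∀ x y : E, ⟪Δ x, y⟫ = ⟪x, Δ y⟫)
    (hcompact : ∀ (α : ℕ → E) (c : ℝ), 0 < c → (∀ n, ‖α n‖ ≤ c) →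
      (∀ n, ‖Δ (α n)‖ ≤ c) → ∃ φ : ℕ → ℕ, StrictMono φ ∧ CauchySeq (α ∘ φ))
    (hweak : ∀ (α : E) (L : E →L[ℝ] ℝ), (∀ θ : E, L (Δ θ) = ⟪α, θ⟫) →
      ∃ ω : E, ∀ β : E, L β = ⟪ω, β⟫)
    (k : ℝ) (hk : 0 < k)
    (hcoercive : ∀ γ ∈ (LinearMap.ker Δ)ᗮ, ‖γ‖ ≤ k * ‖Δ γ‖) :
    FiniteDimensional ℝ (LinearMap.ker Δ) ∧
    (∀ α : E, ∃! β : E, β ∈ (LinearMap.ker Δ)ᗮ ∧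
      α - Δ β ∈ LinearMap.ker Δ ∧ Δ β ∈ (LinearMap.ker Δ)ᗮ) := by
  classical
  set K := LinearMap.ker Δ with hKdef
  -- Finite-dimensionality of the kernel
  have hfd : FiniteDimensional ℝ K := by
    by_contra h
    obtain ⟨R, f, hR, hf1, hf2⟩ := exists_seq_norm_le_one_le_norm_sub (𝕜 := ℝ) h
    obtain ⟨φ, hφ, hc⟩ := hcompact (fun n => (f n : E)) R (lt_trans one_pos hR)
      (fun n => hf1 n)
      (fun n => by
        have : Δ (f n : E) = 0 := (f n).2
        simp [this]; linarith)
    rw [Metric.cauchySeq_iff] at hc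
    obtain ⟨N, hN⟩ := hc 1 one_pos
    have h1 := hN N le_rfl (N + 1) (Nat.le_succ N)
    have hne : φ N ≠ φ (N + 1) := ne_of_lt (hφ (Nat.lt_succ_self N))
    have h2 : (1 : ℝ) ≤ ‖(f (φ N) : E) - (f (φ (N + 1)) : E)‖ := by
      have h2' : (1 : ℝ) ≤ ‖f (φ N) - f (φ (N + 1))‖ := hf2 hne
      rwa [Submodule.coe_norm, Submodule.coe_sub] at h2'
    rw [dist_eq_norm] at h1
    simp only [Function.comp] at h1
    linarith
  refine ⟨hfd, fun α => ?_⟩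
  haveI : CompleteSpace K := FiniteDimensional.complete ℝ K
  -- the orthogonal projection onto K
  set α' : E := α - (Submodule.orthogonalProjectionOnto K α : E) with hα'def
  have hα'mem : α' ∈ Kᗮ := K.sub_starProjection_mem_orthogonal α
  -- well-definedness of the functional on the range
  have key : ∀ θ₁ θ₂ : E, Δ θ₁ = Δ θ₂ → ⟪α', θ₁⟫ = ⟪α', θ₂⟫ := by
    intro θ₁ θ₂ hθ
    have hker : θ₁ - θ₂ ∈ K := by
      simp [hKdef, LinearMap.mem_ker, map_sub, hθ]
    have := (Submodule.mem_orthogonal K α').mp hα'mem _ hker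
    have h0 : ⟪α', θ₁ - θ₂⟫ = 0 := by rwa [real_inner_comm] at this
    rw [inner_sub_right] at h0
    linarith
  -- the linear functional on the range of Δ
  set g : LinearMap.range Δ →ₗ[ℝ] ℝ :=
    { toFun := fun x => ⟪α', Classical.choose x.2⟫
      map_add' := by
        intro x y
        have hx := Classical.choose_spec x.2
        have hy := Classical.choose_spec y.2
        have hxy := Classical.choose_spec (x + y).2
        have : Δ (Classical.choose (x + y).2) =
            Δ (Classical.choose x.2 + Classical.choose y.2) := by
          rw [map_add, hx, hy, hxy]; rfl
        show ⟪α', Classical.choose (x + y).2⟫ =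
          ⟪α', Classical.choose x.2⟫ + ⟪α', Classical.choose y.2⟫
        rw [key _ _ this, inner_add_right]
      map_smul' := by
        intro c x
        have hx := Classical.choose_spec x.2
        have hcx := Classical.choose_spec (c • x).2
        have : Δ (Classical.choose (c • x).2) = Δ (c • Classical.choose x.2) := by
          rw [map_smul, hx, hcx]; rfl
        show ⟪α', Classical.choose (c • x).2⟫ = c * ⟪α', Classical.choose x.2⟫
        rw [key _ _ this, inner_smul_right] } with hgdef
  have hgval : ∀ θ : E, ∀ h : Δ θ ∈ LinearMap.range Δ, g ⟨Δ θ, h⟩ = ⟪α', θ⟫ := by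
    intro θ h
    exact key _ _ (Classical.choose_spec h)
  have gbound : ∀ x : LinearMap.range Δ, ‖g x‖ ≤ (k * ‖α'‖) * ‖x‖ := by
    intro x
    set θ := Classical.choose x.2 with hθdef
    have hθ : Δ θ = (x : E) := Classical.choose_spec x.2
    set θ' : E := θ - (Submodule.orthogonalProjectionOnto K θ : E) with hθ'def
    have hθ'mem : θ' ∈ Kᗮ := K.sub_starProjection_mem_orthogonal θ
    have hΔθ' : Δ θ' = (x : E) := by
      have : Δ ((Submodule.orthogonalProjectionOnto K θ : E)) = 0 := (Submodule.orthogonalProjectionOnto K θ).2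
      rw [hθ'def, map_sub, this, sub_zero, hθ]
    have hval : g x = ⟪α', θ'⟫ := by
      have hip : ⟪α', (Submodule.orthogonalProjectionOnto K θ : E)⟫ = 0 := by
        have := (Submodule.mem_orthogonal K α').mp hα'mem _ (Submodule.orthogonalProjectionOnto K θ).2
        rwa [real_inner_comm] at this
      show ⟪α', θ⟫ = ⟪α', θ'⟫
      rw [hθ'def, inner_sub_right, hip, sub_zero]
    rw [hval]
    calc ‖⟪α', θ'⟫‖ ≤ ‖α'‖ * ‖θ'‖ := by
          simpa using abs_real_inner_le_norm α' θ'
      _ ≤ ‖α'‖ * (k * ‖Δ θ'‖) := by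
          apply mul_le_mul_of_nonneg_left (hcoercive θ' hθ'mem) (norm_nonneg _)
      _ = (k * ‖α'‖) * ‖x‖ := by rw [hΔθ', Submodule.norm_coe]; ring
  set f : LinearMap.range Δ →L[ℝ] ℝ := g.mkContinuous (k * ‖α'‖) gbound with hfdef
  obtain ⟨L, hL, _⟩ := exists_extension_norm_eq (LinearMap.range Δ) f
  have hLΔ : ∀ θ : E, L (Δ θ) = ⟪α', θ⟫ := by
    intro θ
    have hmem : Δ θ ∈ LinearMap.range Δ := LinearMap.mem_range_self Δ θ
    have := hL ⟨Δ θ, hmem⟩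
    rw [this]
    exact hgval θ hmem
  obtain ⟨ω, hω⟩ := hweak α' L hLΔ
  have hΔω : Δ ω = α' := by
    apply ext_inner_right ℝ
    intro θ
    rw [hsym ω θ, ← hω (Δ θ), hLΔ θ]
  -- the solution
  set β : E := ω - (Submodule.orthogonalProjectionOnto K ω : E) with hβdef
  have hβmem : β ∈ Kᗮ := K.sub_starProjection_mem_orthogonal ω
  have hΔβ : Δ β = α' := by
    have : Δ ((Submodule.orthogonalProjectionOnto K ω : E)) = 0 := (Submodule.orthogonalProjectionOnto K ω).2
    rw [hβdef, map_sub, this, sub_zero, hΔω]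
  refine ⟨β, ⟨hβmem, ?_, ?_⟩, ?_⟩
  · rw [hΔβ, hα'def, sub_sub_cancel]
    exact (Submodule.orthogonalProjectionOnto K α).2
  · rw [hΔβ]; exact hα'mem
  · -- uniqueness
    rintro β₂ ⟨hβ₂mem, hβ₂ker, hβ₂orth⟩
    have hβker : α - Δ β ∈ K := by
      rw [hΔβ, hα'def, sub_sub_cancel]; exact (Submodule.orthogonalProjectionOnto K α).2
    have hΔdiff_K : Δ (β₂ - β) ∈ K := by
      have : Δ β₂ - Δ β = (α - Δ β) - (α - Δ β₂) := by abel
      rw [map_sub, this]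
      exact K.sub_mem hβker hβ₂ker
    have hΔdiff_orth : Δ (β₂ - β) ∈ Kᗮ := by
      rw [map_sub]
      exact Kᗮ.sub_mem hβ₂orth ((hΔβ).symm ▸ hα'mem)
    have hΔdiff : Δ (β₂ - β) = 0 := by
      have := Submodule.inner_right_of_mem_orthogonal hΔdiff_K hΔdiff_orth
      exact inner_self_eq_zero.mp this
    have hdiffK : β₂ - β ∈ K := hΔdiff
    have hdiffOrth : β₂ - β ∈ Kᗮ := Kᗮ.sub_mem hβ₂mem hβmem
    have : β₂ - β = 0 := by
      have := Submodule.inner_right_of_mem_orthogonal hdiffK hdiffOrth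
      exact inner_self_eq_zero.mp this
    exact sub_eq_zero.mp this
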